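/- Let CSG_{n,k} be the community star graph on n vertices: a star graph whose weight function assigns weight 1 to k of the edges and weight w to the remaining n−k−1 edges. Let c be the center vertex, x a leaf incident to an edge of weight 1, and y a leaf incident to an edge of weight w. With q_n = n^α, w_n = n^β (α,β∈ℝ) and k constant, the following limits hold as n→∞. For U_{q_n}^{(CSG_{n,k})}(c,x): it converges to 0 if α<0; if α=0, it converges to 1/2 when β>−1, to (k+3)/(2k+8) when β=−1, and to (k+1)/(2k+4) when β<−1; and it converges to 1 if α>0. For U_{q_n}^{(CSG_{n,k})}(c,y): it converges to 0 if α<β, to 1/2 if α=β, and to 1 if α>β. -/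

import Mathlib

open Classical Finset Filter

noncomputable section

variable {V : Type*} [Fintype V] [DecidableEq V]

/-- One step of following the parent map of a rooted forest. -/
def fstep (f : V → Option V) : Option V → Option V := fun o => o.bind f

/-- `f : V → Option V` encodes a spanning rooted forest structure: every vertex either is a
root (`f x = none`) or points to its parent, and iterating the parent map from any vertex
eventually reaches a root (i.e. there are no cycles). -/
def IsForest (f : V → Option V) : Prop :=
  ∀ x : V, ∃ n : ℕ, (fstep f)^[n] (some x) = none

/-- `f` is a spanning rooted forest of the directed graph with edge relation `E`:
all its (parent-pointing) edges are edges of the graph. -/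
def IsRForest (E : V → V → Prop) (f : V → Option V) : Prop :=
  IsForest f ∧ ∀ x y : V, f x = some y → E x y

/-- The number of roots (equivalently, of trees) of a rooted forest. -/
def nRoots (f : V → Option V) : ℕ := (univ.filter fun x : V => f x = none).card

/-- The weight `w(F) = ∏_{e ∈ F} w(e)` of a rooted forest. -/
def fWeight (w : V → V → ℝ) (f : V → Option V) : ℝ :=
  ∏ x : V, (f x).elim 1 (fun y => w x y)

/-- Non-normalised forest measure of a set `H` of forests: `∑_{F ∈ H} q^{r(F)} w(F)`,
the sum running over spanning rooted forests of the graph belonging to `H`. -/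
def fMeasure (E : V → V → Prop) (w : V → V → ℝ) (q : ℝ) (H : Set (V → Option V)) : ℝ :=
  ∑ f ∈ univ.filter (fun f : V → Option V => IsRForest E f ∧ f ∈ H),
    q ^ nRoots f * fWeight w f

/-- Partition function `Z(q) = ∑_F q^{r(F)} w(F)`. -/
def Zf (E : V → V → Prop) (w : V → V → ℝ) (q : ℝ) : ℝ := fMeasure E w q Set.univ

/-- Probability `P(Φ_q ∈ H)` for the random spanning rooted forest `Φ_q`. -/
def fProb (E : V → V → Prop) (w : V → V → ℝ) (q : ℝ) (H : Set (V → Option V)) : ℝ :=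
  fMeasure E w q H / Zf E w q

/-- Ancestor relation in the forest `f`. -/
def anc (f : V → Option V) : V → V → Prop :=
  Relation.ReflTransGen (fun a b => f a = some b)

/-- `x` and `y` belong to the same tree of the forest `f` (they have a common ancestor). -/
def SameTree (f : V → Option V) (x y : V) : Prop := ∃ z, anc f x z ∧ anc f y z

/-- Two-point correlation `U_q(x,y)`: the probability that `x` and `y` lie in
different trees of `Φ_q`. -/
def Ucorr (E : V → V → Prop) (w : V → V → ℝ) (q : ℝ) (x y : V) : ℝ :=
  fProb E w q {f | ¬ SameTree f x y}

end

noncomputable section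

/-- The star graph on `n` vertices (realised on `Fin n`): the centre is the vertex with
label `0`, adjacent to the `n-1` leaves. -/
def starAdj (n : ℕ) : Fin n → Fin n → Prop := fun i j =>
  i ≠ j ∧ ((i : ℕ) = 0 ∨ (j : ℕ) = 0)

/-- The weight function of the community star graph `CSG_{n,k}`: the `k` edges between the
centre (label `0`) and the leaves with labels `1,…,k` have weight `1`, the remaining
`n-k-1` edges have weight `wv`. -/
def cstarW (n k : ℕ) (wv : ℝ) : Fin n → Fin n → ℝ := fun i j =>
  if max (i : ℕ) (j : ℕ) ≤ k then 1 else wv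

/-- Two-point correlation on the community star graph `CSG_{n,k}`, with vertices given by
their labels in `{0,…,n-1}` (junk value `0` for out-of-range labels). -/
def UCStar (n k : ℕ) (wv q : ℝ) (i j : ℕ) : ℝ :=
  if h : i < n ∧ j < n then
    Ucorr (starAdj n) (cstarW n k wv) q ⟨i, h.1⟩ ⟨j, h.2⟩
  else 0

section StarForest

open Finset

variable {n : ℕ} [NeZero n]

/-- Encode a candidate forest of the star from a pair: set of leaves pointing to the
centre, and the centre's pointer. -/
def starFn (p : Finset (Fin n) × Option (Fin n)) : Fin n → Option (Fin n) :=
  fun i => if i = 0 then p.2 else if i ∈ p.1 then some 0 else none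

def PairOK (p : Finset (Fin n) × Option (Fin n)) : Prop :=
  0 ∉ p.1 ∧ ∀ j, p.2 = some j → j ≠ 0 ∧ j ∉ p.1

lemma starFn_zero (p : Finset (Fin n) × Option (Fin n)) : starFn p 0 = p.2 := if_pos rfl

lemma starFn_mem {p : Finset (Fin n) × Option (Fin n)} (hp : PairOK p) {i : Fin n}
    (hi : i ∈ p.1) : starFn p i = some 0 := by
  have : i ≠ 0 := fun h => hp.1 (h ▸ hi)
  simp [starFn, this, hi]

lemma starFn_not_mem {p : Finset (Fin n) × Option (Fin n)} {i : Fin n}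
    (h0 : i ≠ 0) (hi : i ∉ p.1) : starFn p i = none := by
  simp [starFn, h0, hi]

lemma fstep_none (f : Fin n → Option (Fin n)) : fstep f none = none := rfl

lemma fstep_some (f : Fin n → Option (Fin n)) (x : Fin n) : fstep f (some x) = f x := rfl

lemma isRForest_starFn {p : Finset (Fin n) × Option (Fin n)} (hp : PairOK p) :
    IsRForest (starAdj n) (starFn p) := by
  constructor
  · -- IsForest
    have h0 : ∀ m : ℕ, (fstep (starFn p))^[m] none = none := by
      intro m; induction m with
      | zero => rfl
      | succ m ih => rw [Function.iterate_succ_apply, fstep_none]; exact ih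
    have hz : (fstep (starFn p))^[2] (some 0) = none := by
      rw [Function.iterate_succ_apply, fstep_some, starFn_zero]
      cases hc : p.2 with
      | none => rfl
      | some j =>
        obtain ⟨hj0, hjS⟩ := hp.2 j hc
        rw [Function.iterate_one, fstep_some, starFn_not_mem hj0 hjS]
    intro x
    refine ⟨3, ?_⟩
    rw [Function.iterate_succ_apply, fstep_some]
    by_cases hx0 : x = 0
    · subst hx0; rw [starFn_zero]
      cases hc : p.2 with
      | none => exact h0 2
      | some j =>
        obtain ⟨hj0, hjS⟩ := hp.2 j hc
        rw [Function.iterate_succ_apply, fstep_some, starFn_not_mem hj0 hjS]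
        exact h0 1
    · by_cases hxS : x ∈ p.1
      · rw [starFn_mem hp hxS]; exact hz
      · rw [starFn_not_mem hx0 hxS]; exact h0 2
  · -- edges
    intro a b hab
    unfold starFn at hab
    split_ifs at hab with h1 h2
    · obtain ⟨hb0, -⟩ := hp.2 b hab
      subst h1
      refine ⟨fun h => hb0 h.symm, Or.inl rfl⟩
    · cases hab
      exact ⟨h1, Or.inr (Fin.val_zero n)⟩

/-- Decode a forest to a pair. -/
def toPair (f : Fin n → Option (Fin n)) : Finset (Fin n) × Option (Fin n) :=
  (univ.filter (fun i => f i = some 0 ∧ i ≠ 0), f 0)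

lemma pairOK_toPair {f : Fin n → Option (Fin n)} (hf : IsRForest (starAdj n) f) :
    PairOK (toPair f) := by
  constructor
  · simp [toPair]
  · intro j hj
    have hj' : f 0 = some j := hj
    have hedge := hf.2 0 j hj'
    have hj0 : j ≠ 0 := Ne.symm hedge.1
    refine ⟨hj0, ?_⟩
    simp only [toPair, mem_filter, mem_univ, true_and, not_and]
    intro hfj
    -- f 0 = some j, f j = some 0 : cycle, contradiction with IsForest
    exfalso
    have key : ∀ m : ℕ, (fstep f)^[m] (some 0) = some 0 ∨ (fstep f)^[m] (some 0) = some j := by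
      intro m; induction m with
      | zero => exact Or.inl rfl
      | succ m ih =>
        rw [Function.iterate_succ_apply']
        rcases ih with h | h
        · rw [h, fstep_some, hj']; exact Or.inr rfl
        · rw [h, fstep_some, hfj]; exact Or.inl rfl
    obtain ⟨m, hm⟩ := hf.1 0
    rcases key m with h | h <;> rw [hm] at h <;> cases h

lemma starFn_toPair {f : Fin n → Option (Fin n)} (hf : IsRForest (starAdj n) f) :
    starFn (toPair f) = f := by
  funext i
  by_cases hi0 : i = 0
  · subst hi0; exact starFn_zero _
  · cases hfi : f i with
    | none =>
      refine starFn_not_mem hi0 ?_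
      simp [toPair, hfi]
    | some j =>
      have hedge := hf.2 i j hfi
      have hi0' : (i : ℕ) ≠ 0 := fun h => hi0 (Fin.ext (h.trans (Fin.val_zero n).symm))
      have hj : j = 0 := by
        rcases hedge.2 with h | h
        · exact absurd h hi0'
        · exact Fin.ext (h.trans (Fin.val_zero n).symm)
      subst hj
      exact starFn_mem (pairOK_toPair hf) (by simp [toPair, hfi, hi0])

lemma toPair_starFn {p : Finset (Fin n) × Option (Fin n)} (hp : PairOK p) :
    toPair (starFn p) = p := by
  have h1 : (univ.filter (fun i => starFn p i = some 0 ∧ i ≠ 0)) = p.1 := by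
    ext i
    simp only [mem_filter, mem_univ, true_and]
    constructor
    · rintro ⟨hi, hi0⟩
      by_contra hiS
      rw [starFn_not_mem hi0 hiS] at hi
      cases hi
    · intro hi
      have hi0 : i ≠ 0 := fun h => hp.1 (h ▸ hi)
      exact ⟨starFn_mem hp hi, hi0⟩
  have h2 : starFn p 0 = p.2 := starFn_zero p
  rw [toPair, h1, h2]

/-- Sum over forests = sum over pairs. -/
lemma sum_forests (H : Set (Fin n → Option (Fin n))) (g : (Fin n → Option (Fin n)) → ℝ) :
    ∑ f ∈ univ.filter (fun f : Fin n → Option (Fin n) => IsRForest (starAdj n) f ∧ f ∈ H), g f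
      = ∑ p ∈ univ.filter
          (fun p : Finset (Fin n) × Option (Fin n) => PairOK p ∧ starFn p ∈ H), g (starFn p) := by
  refine Finset.sum_bij' (fun f _ => toPair f) (fun p _ => starFn p) ?_ ?_ ?_ ?_ ?_
  · intro f hf
    simp only [mem_filter, mem_univ, true_and] at hf ⊢
    exact ⟨pairOK_toPair hf.1, (starFn_toPair hf.1).symm ▸ hf.2⟩
  · intro p hp
    simp only [mem_filter, mem_univ, true_and] at hp ⊢
    exact ⟨isRForest_starFn hp.1, hp.2⟩
  · intro f hf
    simp only [mem_filter, mem_univ, true_and] at hf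
    exact starFn_toPair hf.1
  · intro p hp
    simp only [mem_filter, mem_univ, true_and] at hp
    exact toPair_starFn hp.1
  · intro f hf
    simp only [mem_filter, mem_univ, true_and] at hf
    rw [starFn_toPair hf.1]

end StarForest

section StarEval

open Finset

variable {n : ℕ} [NeZero n]

lemma nRoots_starFn {p : Finset (Fin n) × Option (Fin n)} (hp : PairOK p) :
    nRoots (starFn p) = (n - 1 - p.1.card) + (if p.2 = none then 1 else 0) := by
  have hset : univ.filter (fun i => starFn p i = none)
      = ((univ.erase (0 : Fin n)) \ p.1) ∪ (if p.2 = none then {(0 : Fin n)} else ∅) := by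
    ext i
    simp only [mem_filter, mem_univ, true_and, mem_union, mem_sdiff, mem_erase, ne_eq]
    by_cases hi0 : i = 0
    · subst hi0
      rw [starFn_zero]
      cases hc : p.2 <;> simp [hc]
    · by_cases hiS : i ∈ p.1
      · rw [starFn_mem hp hiS]
        split_ifs <;> simp [hiS, hi0]
      · rw [starFn_not_mem hi0 hiS]
        split_ifs <;> simp [hiS, hi0]
  have hdisj : Disjoint ((univ.erase (0 : Fin n)) \ p.1)
      (if p.2 = none then ({(0 : Fin n)} : Finset (Fin n)) else ∅) := by
    split_ifs
    · simp [Finset.disjoint_singleton_right]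
    · exact Finset.disjoint_empty_right _
  have hsub : p.1 ⊆ univ.erase (0 : Fin n) := by
    intro i hi
    exact Finset.mem_erase.2 ⟨fun h => hp.1 (h ▸ hi), mem_univ i⟩
  rw [nRoots, hset, Finset.card_union_of_disjoint hdisj, Finset.card_sdiff_of_subset hsub]
  congr 1
  · rw [Finset.card_erase_of_mem (mem_univ _), Finset.card_univ, Fintype.card_fin]
  · split_ifs <;> simp

lemma fWeight_starFn (w : Fin n → Fin n → ℝ) {p : Finset (Fin n) × Option (Fin n)}
    (hp : PairOK p) :
    fWeight w (starFn p) = (p.2.elim 1 (w 0)) * ∏ i ∈ p.1, w i 0 := by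
  rw [fWeight, ← Finset.mul_prod_erase univ _ (mem_univ (0 : Fin n))]
  have hsub : p.1 ⊆ univ.erase (0 : Fin n) := fun i hi =>
    Finset.mem_erase.2 ⟨fun h => hp.1 (h ▸ hi), mem_univ i⟩
  have h2 : (∏ i ∈ univ.erase (0 : Fin n), (starFn p i).elim 1 (fun y => w i y))
      = ∏ i ∈ p.1, w i 0 := by
    have hc : ∀ i ∈ univ.erase (0 : Fin n),
        (starFn p i).elim 1 (fun y => w i y) = if i ∈ p.1 then w i 0 else 1 := by
      intro i hi
      have hi0 : i ≠ 0 := (Finset.mem_erase.1 hi).1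
      by_cases hiS : i ∈ p.1
      · rw [starFn_mem hp hiS, if_pos hiS]; rfl
      · rw [starFn_not_mem hi0 hiS, if_neg hiS]; rfl
    rw [Finset.prod_congr rfl hc, Finset.prod_ite_mem,
      Finset.inter_eq_right.2 hsub]
  rw [h2, starFn_zero]

lemma sameTree_starFn {p : Finset (Fin n) × Option (Fin n)} (hp : PairOK p)
    {x : Fin n} (hx : x ≠ 0) :
    SameTree (starFn p) 0 x ↔ (x ∈ p.1 ∨ p.2 = some x) := by
  constructor
  · rintro ⟨z, h0z, hxz⟩
    by_contra hcon
    push_neg at hcon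
    obtain ⟨hxS, hc⟩ := hcon
    have hfx : starFn p x = none := starFn_not_mem hx hxS
    have hzx : z = x := by
      rcases Relation.ReflTransGen.cases_head hxz with h | ⟨b, hb, -⟩
      · exact h.symm
      · rw [hfx] at hb; cases hb
    rw [hzx] at h0z
    rcases Relation.ReflTransGen.cases_head h0z with h | ⟨b, hb, hbz⟩
    · exact hx h.symm
    · rw [starFn_zero] at hb
      obtain ⟨hb0, hbS⟩ := hp.2 b hb
      have hbx : b ≠ x := fun h => hc (h ▸ hb)
      have hfb : starFn p b = none := starFn_not_mem hb0 hbS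
      rcases Relation.ReflTransGen.cases_head hbz with h | ⟨c, hcb, -⟩
      · exact hbx h
      · rw [hfb] at hcb; cases hcb
  · rintro (hxS | hc)
    · exact ⟨0, Relation.ReflTransGen.refl,
        Relation.ReflTransGen.single (starFn_mem hp hxS)⟩
    · exact ⟨x, Relation.ReflTransGen.single (by rw [starFn_zero]; exact hc),
        Relation.ReflTransGen.refl⟩

end StarEval

section StarMeasure

open Finset

variable {n : ℕ} [NeZero n]

lemma fMeasure_star (w : Fin n → Fin n → ℝ) (q : ℝ) (H : Set (Fin n → Option (Fin n)))
    (A : Finset (Fin n)) (hA : (0 : Fin n) ∉ A)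
    (hcomp : ∀ p : Finset (Fin n) × Option (Fin n), PairOK p →
      (starFn p ∈ H ↔ (p.1 ⊆ A ∧ ∀ j, p.2 = some j → j ∈ A \ p.1))) :
    fMeasure (starAdj n) w q H
      = ∑ S ∈ A.powerset,
          (q ^ (n - 1 - S.card + 1) * ∏ i ∈ S, w i 0
            + ∑ j ∈ A \ S, q ^ (n - 1 - S.card) * (w 0 j * ∏ i ∈ S, w i 0)) := by
  classical
  have hCondOK : ∀ p : Finset (Fin n) × Option (Fin n),
      (p.1 ⊆ A ∧ ∀ j, p.2 = some j → j ∈ A \ p.1) → PairOK p := by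
    intro p hp
    refine ⟨fun h => hA (hp.1 h), fun j hj => ?_⟩
    have h2 := hp.2 j hj
    rw [Finset.mem_sdiff] at h2
    exact ⟨fun h0 => hA (h0 ▸ h2.1), h2.2⟩
  have hfilter : (univ.filter (fun p : Finset (Fin n) × Option (Fin n) =>
        PairOK p ∧ starFn p ∈ H))
      = univ.filter (fun p : Finset (Fin n) × Option (Fin n) =>
          p.1 ⊆ A ∧ ∀ j, p.2 = some j → j ∈ A \ p.1) := by
    ext p
    simp only [mem_filter, mem_univ, true_and]
    constructor
    · rintro ⟨h1, h2⟩; exact (hcomp p h1).1 h2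
    · intro h; exact ⟨hCondOK p h, (hcomp p (hCondOK p h)).2 h⟩
  rw [fMeasure, sum_forests, hfilter]
  set G : Finset (Fin n) × Option (Fin n) → ℝ := fun p =>
    q ^ (n - 1 - p.1.card + (if p.2 = none then 1 else 0))
      * ((p.2.elim 1 (w 0)) * ∏ i ∈ p.1, w i 0) with hG
  have hval : ∀ p ∈ univ.filter (fun p : Finset (Fin n) × Option (Fin n) =>
      p.1 ⊆ A ∧ ∀ j, p.2 = some j → j ∈ A \ p.1),
      q ^ nRoots (starFn p) * fWeight w (starFn p) = G p := by
    intro p hp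
    rw [mem_filter] at hp
    have hOK := hCondOK p hp.2
    rw [nRoots_starFn hOK, fWeight_starFn w hOK]
  rw [Finset.sum_congr rfl hval, Finset.sum_filter, Fintype.sum_prod_type]
  have hps : (univ.filter (fun S : Finset (Fin n) => S ⊆ A)) = A.powerset := by
    ext S; simp [Finset.mem_powerset]
  have hinner : ∀ S : Finset (Fin n),
      (∑ c : Option (Fin n),
        if (S, c).1 ⊆ A ∧ ∀ j, (S, c).2 = some j → j ∈ A \ (S, c).1 then G (S, c) else 0)
      = (if S ⊆ A then (q ^ (n - 1 - S.card + 1) * ∏ i ∈ S, w i 0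
            + ∑ j ∈ A \ S, q ^ (n - 1 - S.card) * (w 0 j * ∏ i ∈ S, w i 0)) else 0) := by
    intro S
    rw [Fintype.sum_option]
    by_cases hS : S ⊆ A
    · simp only [hS, true_and, if_pos]
      have h1 : (∀ j : Fin n, (none : Option (Fin n)) = some j → j ∈ A \ S) := by
        intro j hj; cases hj
      rw [if_pos h1]
      have h2 : ∀ j : Fin n,
          (if (∀ j' : Fin n, (some j : Option (Fin n)) = some j' → j' ∈ A \ S)
            then G (S, some j) else 0)
          = (if j ∈ A \ S then q ^ (n - 1 - S.card) * (w 0 j * ∏ i ∈ S, w i 0) else 0) := by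
        intro j
        have : (∀ j' : Fin n, (some j : Option (Fin n)) = some j' → j' ∈ A \ S) ↔ j ∈ A \ S := by
          constructor
          · intro h; exact h j rfl
          · intro h j' hj'; cases hj'; exact h
        rw [if_congr this rfl rfl]
        split_ifs with h
        · simp [hG]
        · rfl
      rw [Finset.sum_congr rfl (fun j _ => h2 j), Finset.sum_ite_mem, Finset.univ_inter]
      congr 1
      simp [hG]
    · simp only [hS, false_and, if_neg, if_false, not_false_eq_true]
      rw [Finset.sum_const_zero, add_zero]
  rw [Finset.sum_congr rfl (fun S _ => hinner S), ← Finset.sum_filter, hps]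

end StarMeasure

section CoreSum

open Finset

lemma powerset_filter_not_mem {ι : Type*} [DecidableEq ι] (A : Finset ι) (j : ι) :
    (A.powerset.filter (fun S => j ∉ S)) = (A.erase j).powerset := by
  ext S
  simp only [Finset.mem_filter, Finset.mem_powerset, Finset.subset_erase]


lemma sdiff_eq_insert {ι : Type*} [DecidableEq ι] {A S : Finset ι} {j : ι}
    (hj : j ∈ A) (hS : S ⊆ A.erase j) :
    A \ S = insert j ((A.erase j) \ S) := by
  have hjS : j ∉ S := fun h => (Finset.mem_erase.1 (hS h)).1 rfl
  ext a
  simp only [Finset.mem_sdiff, Finset.mem_insert, Finset.mem_erase]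
  constructor
  · rintro ⟨haA, haS⟩
    by_cases haj : a = j
    · exact Or.inl haj
    · exact Or.inr ⟨⟨haj, haA⟩, haS⟩
  · rintro (rfl | ⟨⟨-, haA⟩, haS⟩)
    · exact ⟨hj, hjS⟩
    · exact ⟨haA, haS⟩

lemma core_sum {ι : Type*} [DecidableEq ι] (A : Finset ι) (u v : ι → ℝ) (q : ℝ) :
    ∑ S ∈ A.powerset, (q ^ (A.card - S.card) * ((∏ i ∈ S, u i) * (q + ∑ j ∈ A \ S, v j)))
      = q * ∏ i ∈ A, (u i + q)
        + ∑ j ∈ A, v j * (q * ∏ i ∈ A.erase j, (u i + q)) := by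
  classical
  have hsplit : ∀ S ∈ A.powerset,
      q ^ (A.card - S.card) * ((∏ i ∈ S, u i) * (q + ∑ j ∈ A \ S, v j))
        = ((∏ i ∈ S, u i) * ∏ _i ∈ A \ S, q) * q
          + ∑ j ∈ A, (if j ∉ S then ((∏ i ∈ S, u i) * ∏ _i ∈ A \ S, q) * v j else 0) := by
    intro S hS
    have hpow : q ^ (A.card - S.card) = ∏ _i ∈ A \ S, q := by
      rw [Finset.prod_const, Finset.card_sdiff_of_subset (Finset.mem_powerset.1 hS)]
    have hv : (∑ j ∈ A \ S, v j)
        = ∑ j ∈ A, (if j ∉ S then v j else 0) := by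
      rw [← Finset.sum_filter]
      congr 1
      rw [Finset.sdiff_eq_filter]
    rw [hpow, hv]
    have hmul : ∑ j ∈ A, (if j ∉ S then ((∏ i ∈ S, u i) * ∏ _i ∈ A \ S, q) * v j else 0)
        = ((∏ i ∈ S, u i) * ∏ _i ∈ A \ S, q) * ∑ j ∈ A, (if j ∉ S then v j else 0) := by
      rw [Finset.mul_sum]
      refine Finset.sum_congr rfl fun j _ => ?_
      split_ifs <;> ring
    rw [hmul]; ring
  rw [Finset.sum_congr rfl hsplit, Finset.sum_add_distrib]
  congr 1
  · rw [← Finset.sum_mul, ← Finset.prod_add u (fun _ => q) A, mul_comm]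
  · rw [Finset.sum_comm]
    refine Finset.sum_congr rfl fun j hj => ?_
    rw [← Finset.sum_filter, powerset_filter_not_mem]
    have hterm : ∀ S ∈ (A.erase j).powerset,
        ((∏ i ∈ S, u i) * ∏ _i ∈ A \ S, q) * v j
          = (((∏ i ∈ S, u i) * ∏ _i ∈ (A.erase j) \ S, q) * (q * v j)) := by
      intro S hS
      rw [sdiff_eq_insert hj (Finset.mem_powerset.1 hS),
        Finset.prod_insert (fun h => (Finset.mem_erase.1 (Finset.mem_sdiff.1 h).1).1 rfl)]
      ring
    rw [Finset.sum_congr rfl hterm, ← Finset.sum_mul,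
      ← Finset.prod_add u (fun _ => q) (A.erase j)]
    ring

end CoreSum

section ClosedForm

open Finset

/-- Closed form of the bracket appearing in star-forest partition sums. -/
def csDform (a b : ℕ) (wv q : ℝ) : ℝ :=
  q * (1 + q) ^ a * (wv + q) ^ b + a * (q * (1 + q) ^ (a - 1) * (wv + q) ^ b)
    + b * (wv * (q * (1 + q) ^ a * (wv + q) ^ (b - 1)))

variable {n k : ℕ} [NeZero n] {wv q : ℝ}

/-- The leaf weight in `CSG`: `cstarW i 0 = cstarW 0 i`. -/
lemma cstarW_side (i : Fin n) : cstarW n k wv i 0 = (if (i : ℕ) ≤ k then 1 else wv) := by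
  simp [cstarW]

lemma cstarW_side' (i : Fin n) : cstarW n k wv 0 i = (if (i : ℕ) ≤ k then 1 else wv) := by
  simp [cstarW]

lemma prod_shape (A : Finset (Fin n)) :
    (∏ i ∈ A, ((if (i : ℕ) ≤ k then (1 : ℝ) else wv) + q))
      = (1 + q) ^ (A.filter (fun i : Fin n => (i : ℕ) ≤ k)).card
        * (wv + q) ^ (A.filter (fun i : Fin n => ¬ (i : ℕ) ≤ k)).card := by
  classical
  rw [← Finset.prod_filter_mul_prod_filter_not A (fun i : Fin n => (i : ℕ) ≤ k)]
  congr 1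
  · refine (Finset.prod_congr rfl fun i hi => ?_).trans (Finset.prod_const _)
    rw [if_pos (Finset.mem_filter.1 hi).2]
  · refine (Finset.prod_congr rfl fun i hi => ?_).trans (Finset.prod_const _)
    rw [if_neg (Finset.mem_filter.1 hi).2]

lemma eval_T (A : Finset (Fin n)) :
    q * (∏ i ∈ A, ((if (i : ℕ) ≤ k then (1 : ℝ) else wv) + q))
      + ∑ j ∈ A, (if (j : ℕ) ≤ k then (1 : ℝ) else wv)
          * (q * ∏ i ∈ A.erase j, ((if (i : ℕ) ≤ k then (1 : ℝ) else wv) + q))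
    = csDform (A.filter (fun i : Fin n => (i : ℕ) ≤ k)).card
        (A.filter (fun i : Fin n => ¬ (i : ℕ) ≤ k)).card wv q := by
  classical
  set a := (A.filter (fun i : Fin n => (i : ℕ) ≤ k)).card with ha
  set b := (A.filter (fun i : Fin n => ¬ (i : ℕ) ≤ k)).card with hb
  have hsum : (∑ j ∈ A, (if (j : ℕ) ≤ k then (1 : ℝ) else wv)
        * (q * ∏ i ∈ A.erase j, ((if (i : ℕ) ≤ k then (1 : ℝ) else wv) + q)))
      = a * (q * (1 + q) ^ (a - 1) * (wv + q) ^ b)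
        + b * (wv * (q * (1 + q) ^ a * (wv + q) ^ (b - 1))) := by
    rw [← Finset.sum_filter_add_sum_filter_not A (fun i : Fin n => (i : ℕ) ≤ k)]
    congr 1
    · have hconst : ∀ j ∈ A.filter (fun i : Fin n => (i : ℕ) ≤ k),
          (if (j : ℕ) ≤ k then (1 : ℝ) else wv)
            * (q * ∏ i ∈ A.erase j, ((if (i : ℕ) ≤ k then (1 : ℝ) else wv) + q))
          = q * (1 + q) ^ (a - 1) * (wv + q) ^ b := by
        intro j hj
        have hjP := Finset.mem_filter.1 hj
        rw [if_pos hjP.2, one_mul, prod_shape]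
        have e1 : (A.erase j).filter (fun i : Fin n => (i : ℕ) ≤ k)
            = (A.filter (fun i : Fin n => (i : ℕ) ≤ k)).erase j := Finset.filter_erase _ _ _
        have e2 : (A.erase j).filter (fun i : Fin n => ¬ (i : ℕ) ≤ k)
            = A.filter (fun i : Fin n => ¬ (i : ℕ) ≤ k) := by
          rw [Finset.filter_erase, Finset.erase_eq_of_notMem]
          simp [hjP.2]
        rw [e1, e2, Finset.card_erase_of_mem hj, ← ha, ← hb]
        ring
      rw [Finset.sum_congr rfl hconst, Finset.sum_const, ← ha, nsmul_eq_mul]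
    · have hconst : ∀ j ∈ A.filter (fun i : Fin n => ¬ (i : ℕ) ≤ k),
          (if (j : ℕ) ≤ k then (1 : ℝ) else wv)
            * (q * ∏ i ∈ A.erase j, ((if (i : ℕ) ≤ k then (1 : ℝ) else wv) + q))
          = wv * (q * (1 + q) ^ a * (wv + q) ^ (b - 1)) := by
        intro j hj
        have hjP := Finset.mem_filter.1 hj
        rw [if_neg hjP.2, prod_shape]
        have e1 : (A.erase j).filter (fun i : Fin n => (i : ℕ) ≤ k)
            = A.filter (fun i : Fin n => (i : ℕ) ≤ k) := by
          rw [Finset.filter_erase, Finset.erase_eq_of_notMem]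
          simp [hjP.2]
        have e2 : (A.erase j).filter (fun i : Fin n => ¬ (i : ℕ) ≤ k)
            = (A.filter (fun i : Fin n => ¬ (i : ℕ) ≤ k)).erase j := Finset.filter_erase _ _ _
        rw [e1, e2, Finset.card_erase_of_mem hj, ← ha, ← hb]
        ring
      rw [Finset.sum_congr rfl hconst, Finset.sum_const, ← hb, nsmul_eq_mul]
  rw [hsum, prod_shape, ← ha, ← hb, csDform]
  ring

end ClosedForm

section Instances

open Finset

variable {n k : ℕ} [NeZero n] {wv q : ℝ}

lemma fMeasure_star_closed (wv q : ℝ)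
    (H : Set (Fin n → Option (Fin n))) (A : Finset (Fin n))
    (hA : A ⊆ univ.erase (0 : Fin n))
    (hcomp : ∀ p : Finset (Fin n) × Option (Fin n), PairOK p →
      (starFn p ∈ H ↔ (p.1 ⊆ A ∧ ∀ j, p.2 = some j → j ∈ A \ p.1))) :
    fMeasure (starAdj n) (cstarW n k wv) q H
      = q ^ (n - 1 - A.card)
        * csDform (A.filter (fun i : Fin n => (i : ℕ) ≤ k)).card
            (A.filter (fun i : Fin n => ¬ (i : ℕ) ≤ k)).card wv q := by
  have hA0 : (0 : Fin n) ∉ A := fun h => (Finset.mem_erase.1 (hA h)).1 rfl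
  rw [fMeasure_star (cstarW n k wv) q H A hA0 hcomp]
  have hAcard : A.card ≤ n - 1 := by
    have h := Finset.card_le_card hA
    rwa [Finset.card_erase_of_mem (Finset.mem_univ _), Finset.card_univ,
      Fintype.card_fin] at h
  have hsummand : ∀ S ∈ A.powerset,
      (q ^ (n - 1 - S.card + 1) * ∏ i ∈ S, cstarW n k wv i 0
        + ∑ j ∈ A \ S, q ^ (n - 1 - S.card) * (cstarW n k wv 0 j * ∏ i ∈ S, cstarW n k wv i 0))
      = q ^ (n - 1 - A.card) * (q ^ (A.card - S.card)
          * ((∏ i ∈ S, (if (i : ℕ) ≤ k then (1 : ℝ) else wv))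
            * (q + ∑ j ∈ A \ S, (if (j : ℕ) ≤ k then (1 : ℝ) else wv)))) := by
    intro S hS
    have hSA : S.card ≤ A.card := Finset.card_le_card (Finset.mem_powerset.1 hS)
    have hpow : n - 1 - S.card = (n - 1 - A.card) + (A.card - S.card) := by omega
    have hW : (∏ i ∈ S, cstarW n k wv i 0)
        = ∏ i ∈ S, (if (i : ℕ) ≤ k then (1 : ℝ) else wv) :=
      Finset.prod_congr rfl (fun i _ => cstarW_side i)
    have hsum2 : (∑ j ∈ A \ S, q ^ (n - 1 - S.card)
          * (cstarW n k wv 0 j * ∏ i ∈ S, cstarW n k wv i 0))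
        = (q ^ (n - 1 - S.card) * ∏ i ∈ S, (if (i : ℕ) ≤ k then (1 : ℝ) else wv))
          * ∑ j ∈ A \ S, (if (j : ℕ) ≤ k then (1 : ℝ) else wv) := by
      rw [Finset.mul_sum]
      refine Finset.sum_congr rfl fun j _ => ?_
      rw [hW, cstarW_side']
      ring
    rw [hsum2, hW, hpow, pow_add, pow_succ]
    ring
  rw [Finset.sum_congr rfl hsummand, ← Finset.mul_sum,
    core_sum A (fun i => if (i : ℕ) ≤ k then (1 : ℝ) else wv)
      (fun i => if (i : ℕ) ≤ k then (1 : ℝ) else wv) q, eval_T A]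

lemma filter_L_le (hkn : k < n) :
    ((univ.erase (0 : Fin n)).filter (fun i : Fin n => (i : ℕ) ≤ k)).card = k := by
  rw [Finset.filter_erase]
  have h1 : (univ.filter (fun i : Fin n => (i : ℕ) ≤ k)) = Finset.Iic (⟨k, hkn⟩ : Fin n) := by
    ext i
    simp [Finset.mem_Iic, Fin.le_def]
  have h0 : (0 : Fin n) ∈ univ.filter (fun i : Fin n => (i : ℕ) ≤ k) := by
    simp
  rw [Finset.card_erase_of_mem h0, h1, Fin.card_Iic]
  simp

lemma filter_L_not_le :
    ((univ.erase (0 : Fin n)).filter (fun i : Fin n => ¬ (i : ℕ) ≤ k)).card = n - 1 - k := by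
  rw [Finset.filter_erase]
  have h0 : (0 : Fin n) ∉ univ.filter (fun i : Fin n => ¬ (i : ℕ) ≤ k) := by simp
  rw [Finset.erase_eq_of_notMem h0, Finset.filter_not, Finset.card_sdiff_of_subset (Finset.filter_subset _ _),
    Finset.card_univ, Fintype.card_fin]
  by_cases hkn : k < n
  · have h1 : (univ.filter (fun i : Fin n => (i : ℕ) ≤ k)) = Finset.Iic (⟨k, hkn⟩ : Fin n) := by
      ext i
      simp [Finset.mem_Iic, Fin.le_def]
    rw [h1, Fin.card_Iic]
    simp
    omega
  · have h1 : (univ.filter (fun i : Fin n => (i : ℕ) ≤ k)) = univ := by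
      ext i
      simp only [Finset.mem_filter, Finset.mem_univ, true_and, iff_true]
      omega
    rw [h1, Finset.card_univ, Fintype.card_fin]
    omega

/-- Partition function of the community star graph. -/
lemma Zf_cstar (hkn : k < n) :
    Zf (starAdj n) (cstarW n k wv) q = csDform k (n - 1 - k) wv q := by
  have hcomp : ∀ p : Finset (Fin n) × Option (Fin n), PairOK p →
      (starFn p ∈ (Set.univ : Set (Fin n → Option (Fin n))) ↔
        (p.1 ⊆ univ.erase (0 : Fin n) ∧ ∀ j, p.2 = some j → j ∈ univ.erase (0 : Fin n) \ p.1)) := by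
    intro p hp
    simp only [Set.mem_univ, true_iff]
    constructor
    · intro i hi
      exact Finset.mem_erase.2 ⟨fun h => hp.1 (h ▸ hi), Finset.mem_univ i⟩
    · intro j hj
      obtain ⟨hj0, hjS⟩ := hp.2 j hj
      exact Finset.mem_sdiff.2 ⟨Finset.mem_erase.2 ⟨hj0, Finset.mem_univ j⟩, hjS⟩
  rw [Zf, fMeasure_star_closed wv q _ _ (Finset.Subset.refl _) hcomp,
    filter_L_le hkn, filter_L_not_le]
  have hc : (univ.erase (0 : Fin n)).card = n - 1 := by
    rw [Finset.card_erase_of_mem (Finset.mem_univ _), Finset.card_univ, Fintype.card_fin]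
  rw [hc, Nat.sub_self, pow_zero, one_mul]

end Instances

section Instances2

open Finset

variable {n k : ℕ} [NeZero n] {wv q : ℝ}

lemma hcomp_event {v : Fin n} (hv : v ≠ 0) :
    ∀ p : Finset (Fin n) × Option (Fin n), PairOK p →
      (starFn p ∈ {f : Fin n → Option (Fin n) | ¬ SameTree f 0 v} ↔
        (p.1 ⊆ (univ.erase (0 : Fin n)).erase v ∧
          ∀ j, p.2 = some j → j ∈ (univ.erase (0 : Fin n)).erase v \ p.1)) := by
  intro p hp
  simp only [Set.mem_setOf_eq, sameTree_starFn hp hv]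
  push_neg
  constructor
  · rintro ⟨hv1, hv2⟩
    constructor
    · intro i hi
      refine Finset.mem_erase.2 ⟨fun h => hv1 (h ▸ hi), ?_⟩
      exact Finset.mem_erase.2 ⟨fun h => hp.1 (h ▸ hi), Finset.mem_univ i⟩
    · intro j hj
      obtain ⟨hj0, hjS⟩ := hp.2 j hj
      refine Finset.mem_sdiff.2 ⟨Finset.mem_erase.2 ⟨fun h => hv2 (h ▸ hj), ?_⟩, hjS⟩
      exact Finset.mem_erase.2 ⟨hj0, Finset.mem_univ j⟩
  · rintro ⟨hsub, hj⟩
    constructor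
    · intro hvS
      exact (Finset.mem_erase.1 (hsub hvS)).1 rfl
    · intro hc
      exact (Finset.mem_erase.1 (Finset.mem_sdiff.1 (hj v hc)).1).1 rfl

lemma fMeasure_event_x (hkn : k + 1 < n) {xv : Fin n} (hx1 : 1 ≤ (xv : ℕ))
    (hxk : (xv : ℕ) ≤ k) :
    fMeasure (starAdj n) (cstarW n k wv) q {f : Fin n → Option (Fin n) | ¬ SameTree f 0 xv}
      = q * csDform (k - 1) (n - 1 - k) wv q := by
  have hx0 : xv ≠ 0 := by
    intro h
    rw [h] at hx1
    simp at hx1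
  have hA : ((univ.erase (0 : Fin n)).erase xv) ⊆ univ.erase (0 : Fin n) :=
    Finset.erase_subset _ _
  rw [fMeasure_star_closed wv q _ _ hA (hcomp_event hx0)]
  have hxL : xv ∈ univ.erase (0 : Fin n) := Finset.mem_erase.2 ⟨hx0, Finset.mem_univ _⟩
  have hcard : ((univ.erase (0 : Fin n)).erase xv).card = n - 2 := by
    rw [Finset.card_erase_of_mem hxL, Finset.card_erase_of_mem (Finset.mem_univ _),
      Finset.card_univ, Fintype.card_fin]
    omega
  have hfilter1 : (((univ.erase (0 : Fin n)).erase xv).filter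
      (fun i : Fin n => (i : ℕ) ≤ k)).card = k - 1 := by
    rw [Finset.filter_erase, Finset.card_erase_of_mem, filter_L_le (by omega)]
    exact Finset.mem_filter.2 ⟨hxL, hxk⟩
  have hfilter2 : (((univ.erase (0 : Fin n)).erase xv).filter
      (fun i : Fin n => ¬ (i : ℕ) ≤ k)).card = n - 1 - k := by
    rw [Finset.filter_erase, Finset.erase_eq_of_notMem, filter_L_not_le]
    simp only [Finset.mem_filter, not_and, not_not]
    intro _
    exact hxk
  rw [hcard, hfilter1, hfilter2]
  have : n - 1 - (n - 2) = 1 := by omega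
  rw [this, pow_one]

lemma fMeasure_event_y (hkn : k + 1 < n) {yv : Fin n} (hy1 : k + 1 ≤ (yv : ℕ)) :
    fMeasure (starAdj n) (cstarW n k wv) q {f : Fin n → Option (Fin n) | ¬ SameTree f 0 yv}
      = q * csDform k (n - 2 - k) wv q := by
  have hy0 : yv ≠ 0 := by
    intro h
    rw [h] at hy1
    simp at hy1
  have hA : ((univ.erase (0 : Fin n)).erase yv) ⊆ univ.erase (0 : Fin n) :=
    Finset.erase_subset _ _
  rw [fMeasure_star_closed wv q _ _ hA (hcomp_event hy0)]
  have hyL : yv ∈ univ.erase (0 : Fin n) := Finset.mem_erase.2 ⟨hy0, Finset.mem_univ _⟩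
  have hcard : ((univ.erase (0 : Fin n)).erase yv).card = n - 2 := by
    rw [Finset.card_erase_of_mem hyL, Finset.card_erase_of_mem (Finset.mem_univ _),
      Finset.card_univ, Fintype.card_fin]
    omega
  have hfilter1 : (((univ.erase (0 : Fin n)).erase yv).filter
      (fun i : Fin n => (i : ℕ) ≤ k)).card = k := by
    rw [Finset.filter_erase, Finset.erase_eq_of_notMem, filter_L_le (by omega)]
    simp only [Finset.mem_filter, not_and]
    intro _
    omega
  have hfilter2 : (((univ.erase (0 : Fin n)).erase yv).filter
      (fun i : Fin n => ¬ (i : ℕ) ≤ k)).card = n - 2 - k := by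
    rw [Finset.filter_erase, Finset.card_erase_of_mem, filter_L_not_le]
    · omega
    · refine Finset.mem_filter.2 ⟨hyL, ?_⟩
      omega
  rw [hcard, hfilter1, hfilter2]
  have : n - 1 - (n - 2) = 1 := by omega
  rw [this, pow_one]

lemma csDform_pos {a b : ℕ} (hw : 0 < wv) (hq : 0 < q) : 0 < csDform a b wv q := by
  have h1 : (0 : ℝ) < 1 + q := by linarith
  have h2 : (0 : ℝ) < wv + q := by linarith
  have := Nat.cast_nonneg (α := ℝ) a
  have := Nat.cast_nonneg (α := ℝ) b
  unfold csDform
  positivity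

/-- The two-point correlations in closed form. -/
lemma Ucorr_x (hkn : k + 1 < n) (hw : 0 < wv) (hq : 0 < q) {xv : Fin n}
    (hx1 : 1 ≤ (xv : ℕ)) (hxk : (xv : ℕ) ≤ k) :
    Ucorr (starAdj n) (cstarW n k wv) q 0 xv
      = q * csDform (k - 1) (n - 1 - k) wv q / csDform k (n - 1 - k) wv q := by
  rw [Ucorr, fProb, fMeasure_event_x hkn hx1 hxk, Zf_cstar (by omega)]

lemma Ucorr_y (hkn : k + 1 < n) (hw : 0 < wv) (hq : 0 < q) {yv : Fin n}
    (hy1 : k + 1 ≤ (yv : ℕ)) :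
    Ucorr (starAdj n) (cstarW n k wv) q 0 yv
      = q * csDform k (n - 2 - k) wv q / csDform k (n - 1 - k) wv q := by
  rw [Ucorr, fProb, fMeasure_event_y hkn hy1, Zf_cstar (by omega)]

end Instances2

section Brackets

/-- Bracket polynomials. -/
def brX (k n : ℕ) (w q : ℝ) : ℝ :=
  (1 + q) * (w + q) + ((k : ℝ) - 1) * (w + q) + ((n : ℝ) - 1 - (k : ℝ)) * w * (1 + q)

def brZ (k n : ℕ) (w q : ℝ) : ℝ :=
  (1 + q) * (w + q) + (k : ℝ) * (w + q) + ((n : ℝ) - 1 - (k : ℝ)) * w * (1 + q)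

def brY (k n : ℕ) (w q : ℝ) : ℝ :=
  (1 + q) * (w + q) + (k : ℝ) * (w + q) + ((n : ℝ) - 2 - (k : ℝ)) * w * (1 + q)

variable {n k : ℕ} {w q : ℝ}

lemma ecast1 (hn : k + 2 ≤ n) : ((n - 1 - k : ℕ) : ℝ) = (n : ℝ) - 1 - (k : ℝ) := by
  have h : n - 1 - k = n - (1 + k) := by omega
  rw [h, Nat.cast_sub (by omega)]
  push_cast
  ring

lemma ecast2 (hn : k + 2 ≤ n) : ((n - 2 - k : ℕ) : ℝ) = (n : ℝ) - 2 - (k : ℝ) := by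
  have h : n - 2 - k = n - (2 + k) := by omega
  rw [h, Nat.cast_sub (by omega)]
  push_cast
  ring

lemma ecastk (hk : 1 ≤ k) : ((k - 1 : ℕ) : ℝ) = (k : ℝ) - 1 := by
  rw [Nat.cast_sub hk]
  push_cast
  ring

lemma csD_factor_Z (hk : 1 ≤ k) (hn : k + 2 ≤ n) :
    csDform k (n - 1 - k) w q
      = (q * (1 + q) ^ (k - 1) * (w + q) ^ (n - 2 - k)) * brZ k n w q := by
  obtain ⟨a, rfl⟩ : ∃ a, k = a + 1 := ⟨k - 1, by omega⟩
  have em : n - 1 - (a + 1) = (n - 2 - (a + 1)) + 1 := by omega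
  rw [csDform, brZ, ecast1 hn, em]
  simp only [Nat.add_sub_cancel, pow_succ]
  push_cast
  ring

lemma csD_factor_X (hk : 1 ≤ k) (hn : k + 2 ≤ n) :
    (1 + q) * csDform (k - 1) (n - 1 - k) w q
      = (q * (1 + q) ^ (k - 1) * (w + q) ^ (n - 2 - k)) * brX k n w q := by
  obtain ⟨a, rfl⟩ : ∃ a, k = a + 1 := ⟨k - 1, by omega⟩
  have em : n - 1 - (a + 1) = (n - 2 - (a + 1)) + 1 := by omega
  rw [csDform, brX, ecast1 hn, em]
  simp only [Nat.add_sub_cancel, pow_succ]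
  rcases Nat.eq_zero_or_pos a with rfl | ha
  · simp only [Nat.cast_zero, Nat.cast_one]
    push_cast
    ring
  · obtain ⟨c, rfl⟩ : ∃ c, a = c + 1 := ⟨a - 1, by omega⟩
    simp only [Nat.add_sub_cancel, pow_succ]
    push_cast
    ring

lemma csD_factor_Y (hk : 1 ≤ k) (hn : k + 3 ≤ n) :
    (w + q) * csDform k (n - 2 - k) w q
      = (q * (1 + q) ^ (k - 1) * (w + q) ^ (n - 2 - k)) * brY k n w q := by
  obtain ⟨a, rfl⟩ : ∃ a, k = a + 1 := ⟨k - 1, by omega⟩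
  obtain ⟨j, hj⟩ : ∃ j, n - 2 - (a + 1) = j + 1 := ⟨n - 3 - (a + 1), by omega⟩
  rw [csDform, brY, ecast2 (by omega), hj]
  simp only [Nat.add_sub_cancel, pow_succ]
  push_cast
  ring

end Brackets

section Rational

variable {n k : ℕ} {w q : ℝ}

lemma brZ_pos (hn : k + 2 ≤ n) (hw : 0 < w) (hq : 0 < q) : 0 < brZ k n w q := by
  have hcast : (k : ℝ) + 2 ≤ (n : ℝ) := by exact_mod_cast hn
  have t1 : 0 < (1 + q) * (w + q) := by positivity
  have t2 : (0 : ℝ) ≤ (k : ℝ) * (w + q) := by positivity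
  have t3 : (0 : ℝ) ≤ ((n : ℝ) - 1 - (k : ℝ)) * w * (1 + q) := by
    apply mul_nonneg (mul_nonneg (by linarith) hw.le)
    linarith
  rw [brZ]; linarith

lemma brX_pos (hk : 1 ≤ k) (hn : k + 2 ≤ n) (hw : 0 < w) (hq : 0 < q) : 0 < brX k n w q := by
  have hcast : (k : ℝ) + 2 ≤ (n : ℝ) := by exact_mod_cast hn
  have hkc : (1 : ℝ) ≤ (k : ℝ) := by exact_mod_cast hk
  have t1 : 0 < (1 + q) * (w + q) := by positivity
  have t2 : (0 : ℝ) ≤ ((k : ℝ) - 1) * (w + q) := by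
    apply mul_nonneg (by linarith)
    linarith
  have t3 : (0 : ℝ) ≤ ((n : ℝ) - 1 - (k : ℝ)) * w * (1 + q) := by
    apply mul_nonneg (mul_nonneg (by linarith) hw.le)
    linarith
  rw [brX]; linarith

lemma brY_pos (hn : k + 2 ≤ n) (hw : 0 < w) (hq : 0 < q) : 0 < brY k n w q := by
  have hcast : (k : ℝ) + 2 ≤ (n : ℝ) := by exact_mod_cast hn
  have t1 : 0 < (1 + q) * (w + q) := by positivity
  have t2 : (0 : ℝ) ≤ (k : ℝ) * (w + q) := by positivity
  have t3 : (0 : ℝ) ≤ ((n : ℝ) - 2 - (k : ℝ)) * w * (1 + q) := by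
    apply mul_nonneg (mul_nonneg (by linarith) hw.le)
    linarith
  rw [brY]; linarith

lemma brX_le_brZ (hw : 0 < w) (hq : 0 < q) : brX k n w q ≤ brZ k n w q := by
  rw [brX, brZ]; nlinarith [hw, hq]

lemma brY_le_brZ (hw : 0 < w) (hq : 0 < q) : brY k n w q ≤ brZ k n w q := by
  rw [brY, brZ]; nlinarith [hw, hq]

/-- `U(c,x)` as a rational function of the brackets. -/
lemma UCStar_x_eval (hk : 1 ≤ k) (hn : k + 2 ≤ n) (hw : 0 < w) (hq : 0 < q)
    {xn : ℕ} (hx1 : 1 ≤ xn) (hxk : xn ≤ k) :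
    UCStar n k w q 0 xn = q * brX k n w q / ((1 + q) * brZ k n w q) := by
  haveI : NeZero n := ⟨by omega⟩
  have h : 0 < n ∧ xn < n := ⟨by omega, by omega⟩
  rw [UCStar, dif_pos h]
  have h0 : (⟨0, h.1⟩ : Fin n) = 0 := by
    apply Fin.ext
    simp
  have hx : ((⟨xn, h.2⟩ : Fin n) : ℕ) = xn := rfl
  have hU := Ucorr_x (n := n) (k := k) (wv := w) (q := q) (xv := ⟨xn, h.2⟩)
    (by omega) hw hq (by rw [hx]; exact hx1) (by rw [hx]; exact hxk)
  rw [h0, hU]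
  rw [div_eq_div_iff (ne_of_gt (csDform_pos hw hq))
    (by have := brZ_pos (k := k) (n := n) (by omega) hw hq; positivity)]
  linear_combination q * brZ k n w q * csD_factor_X (w := w) (q := q) hk hn
    - q * brX k n w q * csD_factor_Z (w := w) (q := q) hk hn

/-- `U(c,y)` as a rational function of the brackets. -/
lemma UCStar_y_eval (hk : 1 ≤ k) (hn : k + 3 ≤ n) (hw : 0 < w) (hq : 0 < q)
    {yn : ℕ} (hy1 : k + 1 ≤ yn) (hyn : yn ≤ n - 1) :
    UCStar n k w q 0 yn = q * brY k n w q / ((w + q) * brZ k n w q) := by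
  haveI : NeZero n := ⟨by omega⟩
  have h : 0 < n ∧ yn < n := ⟨by omega, by omega⟩
  rw [UCStar, dif_pos h]
  have h0 : (⟨0, h.1⟩ : Fin n) = 0 := by
    apply Fin.ext
    simp
  have hy : ((⟨yn, h.2⟩ : Fin n) : ℕ) = yn := rfl
  have hU := Ucorr_y (n := n) (k := k) (wv := w) (q := q) (yv := ⟨yn, h.2⟩)
    (by omega) hw hq (by rw [hy]; exact hy1)
  rw [h0, hU]
  rw [div_eq_div_iff (ne_of_gt (csDform_pos hw hq))
    (by have := brZ_pos (k := k) (n := n) (by omega) hw hq; positivity)]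
  linear_combination q * brZ k n w q * csD_factor_Y (w := w) (q := q) hk hn
    - q * brY k n w q * csD_factor_Z (n := n) (w := w) (q := q) hk (by omega)

end Rational

section Analysis

open Filter Real

lemma tendsto_nrpow_atTop {α : ℝ} (hα : 0 < α) :
    Tendsto (fun n : ℕ => (n : ℝ) ^ α) atTop atTop :=
  (tendsto_rpow_atTop hα).comp tendsto_natCast_atTop_atTop

lemma tendsto_nrpow_zero {α : ℝ} (hα : α < 0) :
    Tendsto (fun n : ℕ => (n : ℝ) ^ α) atTop (nhds 0) := by
  have h := (tendsto_rpow_neg_atTop (y := -α) (by linarith)).comp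
    (tendsto_natCast_atTop_atTop (R := ℝ))
  simpa [Function.comp_def] using h

variable {k : ℕ} {α β : ℝ}

lemma limX_neg (hk : 1 ≤ k) (hα : α < 0) :
    Tendsto (fun n : ℕ => (n : ℝ) ^ α * brX k n ((n : ℝ) ^ β) ((n : ℝ) ^ α)
      / ((1 + (n : ℝ) ^ α) * brZ k n ((n : ℝ) ^ β) ((n : ℝ) ^ α))) atTop (nhds 0) := by
  refine tendsto_of_tendsto_of_tendsto_of_le_of_le' tendsto_const_nhds
    (tendsto_nrpow_zero hα) ?_ ?_
  · filter_upwards [eventually_ge_atTop (k + 2)] with n hn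
    have hn0 : (0 : ℝ) < n := by exact_mod_cast Nat.lt_of_lt_of_le (by omega) hn
    have hq : 0 < (n : ℝ) ^ α := rpow_pos_of_pos hn0 α
    have hw : 0 < (n : ℝ) ^ β := rpow_pos_of_pos hn0 β
    have h1 := brX_pos hk hn hw hq
    have h2 := brZ_pos hn hw hq
    positivity
  · filter_upwards [eventually_ge_atTop (k + 2)] with n hn
    have hn0 : (0 : ℝ) < n := by exact_mod_cast Nat.lt_of_lt_of_le (by omega) hn
    have hq : 0 < (n : ℝ) ^ α := rpow_pos_of_pos hn0 α
    have hw : 0 < (n : ℝ) ^ β := rpow_pos_of_pos hn0 β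
    have h1 := brX_le_brZ (k := k) (n := n) hw hq
    have h2 := brZ_pos hn hw hq
    rw [div_le_iff₀ (by positivity)]
    nlinarith [mul_le_mul_of_nonneg_left h1 hq.le,
      mul_nonneg (mul_nonneg hq.le hq.le) h2.le]

lemma limX_pos (hk : 1 ≤ k) (hα : 0 < α) :
    Tendsto (fun n : ℕ => (n : ℝ) ^ α * brX k n ((n : ℝ) ^ β) ((n : ℝ) ^ α)
      / ((1 + (n : ℝ) ^ α) * brZ k n ((n : ℝ) ^ β) ((n : ℝ) ^ α))) atTop (nhds 1) := by
  have hR : Tendsto (fun n : ℕ => 2 / (1 + (n : ℝ) ^ α)) atTop (nhds 0) := by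
    apply Tendsto.div_atTop tendsto_const_nhds
    exact tendsto_atTop_add_const_left _ 1 (tendsto_nrpow_atTop hα)
  have key : Tendsto (fun n : ℕ => 1 - (n : ℝ) ^ α * brX k n ((n : ℝ) ^ β) ((n : ℝ) ^ α)
      / ((1 + (n : ℝ) ^ α) * brZ k n ((n : ℝ) ^ β) ((n : ℝ) ^ α))) atTop (nhds 0) := by
    refine tendsto_of_tendsto_of_tendsto_of_le_of_le' tendsto_const_nhds hR ?_ ?_
    · filter_upwards [eventually_ge_atTop (k + 2)] with n hn
      have hn0 : (0 : ℝ) < n := by exact_mod_cast Nat.lt_of_lt_of_le (by omega) hn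
      have hq : 0 < (n : ℝ) ^ α := rpow_pos_of_pos hn0 α
      have hw : 0 < (n : ℝ) ^ β := rpow_pos_of_pos hn0 β
      have h1 := brX_le_brZ (k := k) (n := n) hw hq
      have h2 := brZ_pos hn hw hq
      have hle : (n : ℝ) ^ α * brX k n ((n : ℝ) ^ β) ((n : ℝ) ^ α)
          / ((1 + (n : ℝ) ^ α) * brZ k n ((n : ℝ) ^ β) ((n : ℝ) ^ α)) ≤ 1 := by
        rw [div_le_one (by positivity)]
        nlinarith
      linarith
    · filter_upwards [eventually_ge_atTop (k + 2)] with n hn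
      have hn0 : (0 : ℝ) < n := by exact_mod_cast Nat.lt_of_lt_of_le (by omega) hn
      have hq : 0 < (n : ℝ) ^ α := rpow_pos_of_pos hn0 α
      have hw : 0 < (n : ℝ) ^ β := rpow_pos_of_pos hn0 β
      have h2 := brZ_pos hn hw hq
      have hbig : (1 + (n : ℝ) ^ α) * ((n : ℝ) ^ β + (n : ℝ) ^ α)
          ≤ brZ k n ((n : ℝ) ^ β) ((n : ℝ) ^ α) := by
        have hcast : (k : ℝ) + 2 ≤ (n : ℝ) := by exact_mod_cast hn
        have t2 : (0 : ℝ) ≤ (k : ℝ) * ((n : ℝ) ^ β + (n : ℝ) ^ α) := by positivity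
        have t3 : (0 : ℝ) ≤ ((n : ℝ) - 1 - (k : ℝ)) * ((n : ℝ) ^ β) * (1 + (n : ℝ) ^ α) := by
          apply mul_nonneg (mul_nonneg (by linarith) hw.le)
          linarith
        rw [brZ]; linarith
      have hnum : (1 + (n : ℝ) ^ α) * brZ k n ((n : ℝ) ^ β) ((n : ℝ) ^ α)
          - (n : ℝ) ^ α * brX k n ((n : ℝ) ^ β) ((n : ℝ) ^ α)
          = brZ k n ((n : ℝ) ^ β) ((n : ℝ) ^ α)
            + (n : ℝ) ^ α * ((n : ℝ) ^ β + (n : ℝ) ^ α) := by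
        rw [brX, brZ]; ring
      have hFval : 1 - (n : ℝ) ^ α * brX k n ((n : ℝ) ^ β) ((n : ℝ) ^ α)
          / ((1 + (n : ℝ) ^ α) * brZ k n ((n : ℝ) ^ β) ((n : ℝ) ^ α))
          = (brZ k n ((n : ℝ) ^ β) ((n : ℝ) ^ α)
              + (n : ℝ) ^ α * ((n : ℝ) ^ β + (n : ℝ) ^ α))
            / ((1 + (n : ℝ) ^ α) * brZ k n ((n : ℝ) ^ β) ((n : ℝ) ^ α)) := by
        rw [eq_div_iff (by positivity), sub_mul, div_mul_cancel₀ _ (by positivity)]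
        linarith [hnum]
      rw [hFval]
      rw [div_le_div_iff₀ (by positivity) (by positivity)]
      nlinarith [hbig, hq, hw, h2]
  have : (fun n : ℕ => (n : ℝ) ^ α * brX k n ((n : ℝ) ^ β) ((n : ℝ) ^ α)
      / ((1 + (n : ℝ) ^ α) * brZ k n ((n : ℝ) ^ β) ((n : ℝ) ^ α)))
      = fun n : ℕ => 1 - (1 - (n : ℝ) ^ α * brX k n ((n : ℝ) ^ β) ((n : ℝ) ^ α)
      / ((1 + (n : ℝ) ^ α) * brZ k n ((n : ℝ) ^ β) ((n : ℝ) ^ α))) := by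
    funext n; ring
  rw [this]
  simpa using (tendsto_const_nhds (x := (1:ℝ))).sub key

lemma limY_lt (hk : 1 ≤ k) (hαβ : α < β) :
    Tendsto (fun n : ℕ => (n : ℝ) ^ α * brY k n ((n : ℝ) ^ β) ((n : ℝ) ^ α)
      / (((n : ℝ) ^ β + (n : ℝ) ^ α) * brZ k n ((n : ℝ) ^ β) ((n : ℝ) ^ α))) atTop (nhds 0) := by
  refine tendsto_of_tendsto_of_tendsto_of_le_of_le' tendsto_const_nhds
    (tendsto_nrpow_zero (α := α - β) (by linarith)) ?_ ?_
  · filter_upwards [eventually_ge_atTop (k + 2)] with n hn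
    have hn0 : (0 : ℝ) < n := by exact_mod_cast Nat.lt_of_lt_of_le (by omega) hn
    have hq : 0 < (n : ℝ) ^ α := rpow_pos_of_pos hn0 α
    have hw : 0 < (n : ℝ) ^ β := rpow_pos_of_pos hn0 β
    have h1 := brY_pos (k := k) hn hw hq
    have h2 := brZ_pos hn hw hq
    positivity
  · filter_upwards [eventually_ge_atTop (k + 2)] with n hn
    have hn0 : (0 : ℝ) < n := by exact_mod_cast Nat.lt_of_lt_of_le (by omega) hn
    have hq : 0 < (n : ℝ) ^ α := rpow_pos_of_pos hn0 α
    have hw : 0 < (n : ℝ) ^ β := rpow_pos_of_pos hn0 β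
    have h1 := brY_le_brZ (k := k) (n := n) hw hq
    have h2 := brZ_pos hn hw hq
    rw [Real.rpow_sub hn0, div_le_div_iff₀ (by positivity) (by positivity)]
    nlinarith [mul_le_mul_of_nonneg_left h1 (mul_pos hq hw).le,
      mul_nonneg (mul_nonneg hq.le hq.le) h2.le]

lemma limY_gt (hk : 1 ≤ k) (hαβ : β < α) :
    Tendsto (fun n : ℕ => (n : ℝ) ^ α * brY k n ((n : ℝ) ^ β) ((n : ℝ) ^ α)
      / (((n : ℝ) ^ β + (n : ℝ) ^ α) * brZ k n ((n : ℝ) ^ β) ((n : ℝ) ^ α))) atTop (nhds 1) := by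
  have hR : Tendsto (fun n : ℕ => 2 * (n : ℝ) ^ (β - α)) atTop (nhds 0) := by
    have := (tendsto_nrpow_zero (α := β - α) (by linarith)).const_mul 2
    simpa using this
  have key : Tendsto (fun n : ℕ => 1 - (n : ℝ) ^ α * brY k n ((n : ℝ) ^ β) ((n : ℝ) ^ α)
      / (((n : ℝ) ^ β + (n : ℝ) ^ α) * brZ k n ((n : ℝ) ^ β) ((n : ℝ) ^ α)))
      atTop (nhds 0) := by
    refine tendsto_of_tendsto_of_tendsto_of_le_of_le' tendsto_const_nhds hR ?_ ?_
    · filter_upwards [eventually_ge_atTop (k + 2)] with n hn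
      have hn0 : (0 : ℝ) < n := by exact_mod_cast Nat.lt_of_lt_of_le (by omega) hn
      have hq : 0 < (n : ℝ) ^ α := rpow_pos_of_pos hn0 α
      have hw : 0 < (n : ℝ) ^ β := rpow_pos_of_pos hn0 β
      have h1 := brY_le_brZ (k := k) (n := n) hw hq
      have h2 := brZ_pos hn hw hq
      have hle : (n : ℝ) ^ α * brY k n ((n : ℝ) ^ β) ((n : ℝ) ^ α)
          / (((n : ℝ) ^ β + (n : ℝ) ^ α) * brZ k n ((n : ℝ) ^ β) ((n : ℝ) ^ α)) ≤ 1 := by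
        rw [div_le_one (by positivity)]
        nlinarith [mul_nonneg hw.le h2.le]
      linarith
    · filter_upwards [eventually_ge_atTop (k + 2)] with n hn
      have hn0 : (0 : ℝ) < n := by exact_mod_cast Nat.lt_of_lt_of_le (by omega) hn
      have hq : 0 < (n : ℝ) ^ α := rpow_pos_of_pos hn0 α
      have hw : 0 < (n : ℝ) ^ β := rpow_pos_of_pos hn0 β
      have h2 := brZ_pos hn hw hq
      have hbig : (1 + (n : ℝ) ^ α) * ((n : ℝ) ^ β + (n : ℝ) ^ α)
          ≤ brZ k n ((n : ℝ) ^ β) ((n : ℝ) ^ α) := by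
        have hcast : (k : ℝ) + 2 ≤ (n : ℝ) := by exact_mod_cast hn
        have t2 : (0 : ℝ) ≤ (k : ℝ) * ((n : ℝ) ^ β + (n : ℝ) ^ α) := by positivity
        have t3 : (0 : ℝ) ≤ ((n : ℝ) - 1 - (k : ℝ)) * ((n : ℝ) ^ β) * (1 + (n : ℝ) ^ α) := by
          apply mul_nonneg (mul_nonneg (by linarith) hw.le)
          linarith
        rw [brZ]; linarith
      have hnum : ((n : ℝ) ^ β + (n : ℝ) ^ α) * brZ k n ((n : ℝ) ^ β) ((n : ℝ) ^ α)
          - (n : ℝ) ^ α * brY k n ((n : ℝ) ^ β) ((n : ℝ) ^ α)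
          = (n : ℝ) ^ β * brZ k n ((n : ℝ) ^ β) ((n : ℝ) ^ α)
            + (n : ℝ) ^ α * ((n : ℝ) ^ β * (1 + (n : ℝ) ^ α)) := by
        rw [brY, brZ]; ring
      have hFval : 1 - (n : ℝ) ^ α * brY k n ((n : ℝ) ^ β) ((n : ℝ) ^ α)
          / (((n : ℝ) ^ β + (n : ℝ) ^ α) * brZ k n ((n : ℝ) ^ β) ((n : ℝ) ^ α))
          = ((n : ℝ) ^ β * brZ k n ((n : ℝ) ^ β) ((n : ℝ) ^ α)
              + (n : ℝ) ^ α * ((n : ℝ) ^ β * (1 + (n : ℝ) ^ α)))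
            / (((n : ℝ) ^ β + (n : ℝ) ^ α) * brZ k n ((n : ℝ) ^ β) ((n : ℝ) ^ α)) := by
        rw [eq_div_iff (by positivity), sub_mul, div_mul_cancel₀ _ (by positivity)]
        linarith [hnum]
      rw [hFval, Real.rpow_sub hn0, ← mul_div_assoc, div_le_div_iff₀ (by positivity) (by positivity)]
      have e1 : (n : ℝ) ^ α * ((n : ℝ) ^ β * brZ k n ((n : ℝ) ^ β) ((n : ℝ) ^ α))
          ≤ ((n : ℝ) ^ β + (n : ℝ) ^ α)
            * ((n : ℝ) ^ β * brZ k n ((n : ℝ) ^ β) ((n : ℝ) ^ α)) := by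
        apply mul_le_mul_of_nonneg_right (by linarith) (by positivity)
      have e3 : ((n : ℝ) ^ β * (1 + (n : ℝ) ^ α)) * ((n : ℝ) ^ β + (n : ℝ) ^ α)
          ≤ (n : ℝ) ^ β * brZ k n ((n : ℝ) ^ β) ((n : ℝ) ^ α) := by
        have := mul_le_mul_of_nonneg_left hbig hw.le
        nlinarith [this]
      nlinarith [e1, e3, mul_le_mul_of_nonneg_left e3 hq.le,
        mul_nonneg hq.le (mul_nonneg hw.le h2.le)]
  have heq : (fun n : ℕ => (n : ℝ) ^ α * brY k n ((n : ℝ) ^ β) ((n : ℝ) ^ α)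
      / (((n : ℝ) ^ β + (n : ℝ) ^ α) * brZ k n ((n : ℝ) ^ β) ((n : ℝ) ^ α)))
      = fun n : ℕ => 1 - (1 - (n : ℝ) ^ α * brY k n ((n : ℝ) ^ β) ((n : ℝ) ^ α)
      / (((n : ℝ) ^ β + (n : ℝ) ^ α) * brZ k n ((n : ℝ) ^ β) ((n : ℝ) ^ α))) := by
    funext n; ring
  rw [heq]
  simpa using (tendsto_const_nhds (x := (1:ℝ))).sub key

/-- Auxiliary: `1/M → 0`. -/
lemma tendsto_invM (k : ℕ) :
    Tendsto (fun n : ℕ => ((n : ℝ) - 1 - (k : ℝ))⁻¹) atTop (nhds 0) := by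
  have h : Tendsto (fun n : ℕ => (n : ℝ) + (-1 - (k : ℝ))) atTop atTop :=
    tendsto_atTop_add_const_right _ _ tendsto_natCast_atTop_atTop
  exact tendsto_inv_atTop_zero.comp (h.congr (fun n => by ring))

/-- Auxiliary: `M·w → ∞` when `β > -1`. -/
lemma tendsto_Mw_atTop (k : ℕ) (hβ : -1 < β) :
    Tendsto (fun n : ℕ => ((n : ℝ) - 1 - (k : ℝ)) * (n : ℝ) ^ β) atTop atTop := by
  apply tendsto_atTop_mono' _ _ ((tendsto_nrpow_atTop (α := 1 + β) (by linarith)).const_mul_atTop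
    (by norm_num : (0:ℝ) < 1/2))
  filter_upwards [eventually_ge_atTop (2 * (k + 2))] with n hn
  have hn0 : (0 : ℝ) < n := by exact_mod_cast Nat.lt_of_lt_of_le (by omega) hn
  have hw : 0 < (n : ℝ) ^ β := rpow_pos_of_pos hn0 β
  have hM : (n : ℝ) / 2 ≤ (n : ℝ) - 1 - (k : ℝ) := by
    have : (2 * (k + 2) : ℝ) ≤ (n : ℝ) := by exact_mod_cast hn
    linarith
  have hr : (n : ℝ) ^ (1 + β) = (n : ℝ) * (n : ℝ) ^ β := by
    rw [Real.rpow_add hn0, Real.rpow_one]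
  rw [hr]
  calc (1/2) * ((n : ℝ) * (n : ℝ) ^ β) = ((n : ℝ)/2) * (n : ℝ) ^ β := by ring
    _ ≤ ((n : ℝ) - 1 - (k : ℝ)) * (n : ℝ) ^ β := by
        exact mul_le_mul_of_nonneg_right hM hw.le

/-- Auxiliary: `M·w → 0` when `β < -1`. -/
lemma tendsto_Mw_zero (k : ℕ) (hβ : β < -1) :
    Tendsto (fun n : ℕ => ((n : ℝ) - 1 - (k : ℝ)) * (n : ℝ) ^ β) atTop (nhds 0) := by
  refine tendsto_of_tendsto_of_tendsto_of_le_of_le' tendsto_const_nhds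
    (tendsto_nrpow_zero (α := 1 + β) (by linarith)) ?_ ?_
  · filter_upwards [eventually_ge_atTop (k + 2)] with n hn
    have hn0 : (0 : ℝ) < n := by exact_mod_cast Nat.lt_of_lt_of_le (by omega) hn
    have hw : 0 < (n : ℝ) ^ β := rpow_pos_of_pos hn0 β
    have hcast : (k : ℝ) + 2 ≤ (n : ℝ) := by exact_mod_cast hn
    apply mul_nonneg (by linarith) hw.le
  · filter_upwards [eventually_ge_atTop (k + 2)] with n hn
    have hn0 : (0 : ℝ) < n := by exact_mod_cast Nat.lt_of_lt_of_le (by omega) hn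
    have hw : 0 < (n : ℝ) ^ β := rpow_pos_of_pos hn0 β
    have hr : (n : ℝ) ^ (1 + β) = (n : ℝ) * (n : ℝ) ^ β := by
      rw [Real.rpow_add hn0, Real.rpow_one]
    rw [hr]
    apply mul_le_mul_of_nonneg_right _ hw.le
    have hcast : (k : ℝ) + 2 ≤ (n : ℝ) := by exact_mod_cast hn
    linarith

/-- Auxiliary: `M·n⁻¹ → 1`. -/
lemma tendsto_Mdivn (k : ℕ) :
    Tendsto (fun n : ℕ => ((n : ℝ) - 1 - (k : ℝ)) * (n : ℝ) ^ (-1 : ℝ)) atTop (nhds 1) := by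
  have h1 : Tendsto (fun n : ℕ => 1 - ((k : ℝ) + 1) * ((n : ℝ))⁻¹) atTop (nhds 1) := by
    have h2 : Tendsto (fun n : ℕ => ((n : ℝ))⁻¹) atTop (nhds 0) :=
      tendsto_inv_atTop_zero.comp tendsto_natCast_atTop_atTop
    have h3 := h2.const_mul ((k : ℝ) + 1)
    have := (tendsto_const_nhds (x := (1:ℝ)) (f := atTop (α := ℕ))).sub h3
    simpa using this
  apply h1.congr'
  filter_upwards [eventually_ge_atTop 1] with n hn
  have hn0 : (0 : ℝ) < n := by exact_mod_cast Nat.lt_of_lt_of_le (by omega) hn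
  rw [Real.rpow_neg_one]
  field_simp
  ring

/-- `U(c,x)` for `q = 1`, as a function of `w` and `M·w`. -/
lemma X_q1_identity {n k : ℕ} {w : ℝ} (hk : 1 ≤ k) (hn : k + 2 ≤ n) (hw : 0 < w) :
    (1 : ℝ) * brX k n w 1 / ((1 + 1) * brZ k n w 1)
      = (((k : ℝ) + 1) * (w + 1) + 2 * (((n : ℝ) - 1 - (k : ℝ)) * w))
        / (2 * (((k : ℝ) + 2) * (w + 1) + 2 * (((n : ℝ) - 1 - (k : ℝ)) * w))) := by
  rw [brX, brZ]
  congr 1 <;> ring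

lemma limX_zero (hk : 1 ≤ k) (L : ℝ)
    (hLim : Tendsto (fun n : ℕ =>
      (((k : ℝ) + 1) * ((n : ℝ) ^ β + 1) + 2 * (((n : ℝ) - 1 - (k : ℝ)) * (n : ℝ) ^ β))
      / (2 * (((k : ℝ) + 2) * ((n : ℝ) ^ β + 1)
          + 2 * (((n : ℝ) - 1 - (k : ℝ)) * (n : ℝ) ^ β)))) atTop (nhds L)) :
    Tendsto (fun n : ℕ => (n : ℝ) ^ (0:ℝ) * brX k n ((n : ℝ) ^ β) ((n : ℝ) ^ (0:ℝ))
      / ((1 + (n : ℝ) ^ (0:ℝ)) * brZ k n ((n : ℝ) ^ β) ((n : ℝ) ^ (0:ℝ)))) atTop (nhds L) := by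
  apply hLim.congr'
  filter_upwards [eventually_ge_atTop (k + 2)] with n hn
  have hn0 : (0 : ℝ) < n := by exact_mod_cast Nat.lt_of_lt_of_le (by omega) hn
  have hw : 0 < (n : ℝ) ^ β := rpow_pos_of_pos hn0 β
  rw [Real.rpow_zero, X_q1_identity hk hn hw]

lemma limX_zero_big (hk : 1 ≤ k) (hβ : -1 < β) :
    Tendsto (fun n : ℕ => (n : ℝ) ^ (0:ℝ) * brX k n ((n : ℝ) ^ β) ((n : ℝ) ^ (0:ℝ))
      / ((1 + (n : ℝ) ^ (0:ℝ)) * brZ k n ((n : ℝ) ^ β) ((n : ℝ) ^ (0:ℝ))))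
      atTop (nhds (1 / 2)) := by
  apply limX_zero hk
  -- divide numerator and denominator by M·w
  have hr : Tendsto (fun n : ℕ => ((n : ℝ) ^ β + 1) / (((n : ℝ) - 1 - (k : ℝ)) * (n : ℝ) ^ β))
      atTop (nhds 0) := by
    have h1 : Tendsto (fun n : ℕ => (((n : ℝ) - 1 - (k : ℝ)) * (n : ℝ) ^ β)⁻¹)
        atTop (nhds 0) := tendsto_inv_atTop_zero.comp (tendsto_Mw_atTop k hβ)
    have h2 : Tendsto (fun n : ℕ => ((n : ℝ) - 1 - (k : ℝ))⁻¹) atTop (nhds 0) := tendsto_invM k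
    have := h1.add h2
    rw [add_zero] at this
    apply this.congr'
    filter_upwards [eventually_ge_atTop (k + 2)] with n hn
    have hn0 : (0 : ℝ) < n := by exact_mod_cast Nat.lt_of_lt_of_le (by omega) hn
    have hw : 0 < (n : ℝ) ^ β := rpow_pos_of_pos hn0 β
    have hcast : (k : ℝ) + 2 ≤ (n : ℝ) := by exact_mod_cast hn
    have hM : (0 : ℝ) < (n : ℝ) - 1 - (k : ℝ) := by linarith
    field_simp
    ring
  have hden : Tendsto (fun n : ℕ =>
      2 * (((k : ℝ) + 2) * (((n : ℝ) ^ β + 1) / (((n : ℝ) - 1 - (k : ℝ)) * (n : ℝ) ^ β)) + 2))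
      atTop (nhds (2 * (((k : ℝ) + 2) * 0 + 2))) :=
    (((hr.const_mul _).add_const 2).const_mul 2)
  have hnum : Tendsto (fun n : ℕ =>
      ((k : ℝ) + 1) * (((n : ℝ) ^ β + 1) / (((n : ℝ) - 1 - (k : ℝ)) * (n : ℝ) ^ β)) + 2)
      atTop (nhds (((k : ℝ) + 1) * 0 + 2)) :=
    (hr.const_mul _).add_const 2
  have hquot := hnum.div hden (by norm_num)
  have : (((k : ℝ) + 1) * 0 + 2) / (2 * (((k : ℝ) + 2) * 0 + 2)) = 1 / 2 := by norm_num
  rw [this] at hquot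
  apply hquot.congr'
  filter_upwards [eventually_ge_atTop (k + 2)] with n hn
  have hn0 : (0 : ℝ) < n := by exact_mod_cast Nat.lt_of_lt_of_le (by omega) hn
  have hw : 0 < (n : ℝ) ^ β := rpow_pos_of_pos hn0 β
  have hcast : (k : ℝ) + 2 ≤ (n : ℝ) := by exact_mod_cast hn
  have hM : (0 : ℝ) < (n : ℝ) - 1 - (k : ℝ) := by linarith
  rw [Pi.div_apply]
  field_simp

lemma limX_zero_crit (hk : 1 ≤ k) :
    Tendsto (fun n : ℕ => (n : ℝ) ^ (0:ℝ) * brX k n ((n : ℝ) ^ (-1:ℝ)) ((n : ℝ) ^ (0:ℝ))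
      / ((1 + (n : ℝ) ^ (0:ℝ)) * brZ k n ((n : ℝ) ^ (-1:ℝ)) ((n : ℝ) ^ (0:ℝ))))
      atTop (nhds (((k : ℝ) + 3) / (2 * (k : ℝ) + 8))) := by
  apply limX_zero hk
  have hw : Tendsto (fun n : ℕ => (n : ℝ) ^ (-1:ℝ)) atTop (nhds 0) :=
    tendsto_nrpow_zero (by norm_num)
  have hs := tendsto_Mdivn k
  have hnum : Tendsto (fun n : ℕ =>
      ((k : ℝ) + 1) * ((n : ℝ) ^ (-1:ℝ) + 1) + 2 * (((n : ℝ) - 1 - (k : ℝ)) * (n : ℝ) ^ (-1:ℝ)))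
      atTop (nhds (((k : ℝ) + 1) * (0 + 1) + 2 * 1)) :=
    ((hw.add_const 1).const_mul _).add (hs.const_mul 2)
  have hden : Tendsto (fun n : ℕ =>
      2 * (((k : ℝ) + 2) * ((n : ℝ) ^ (-1:ℝ) + 1) + 2 * (((n : ℝ) - 1 - (k : ℝ)) * (n : ℝ) ^ (-1:ℝ))))
      atTop (nhds (2 * (((k : ℝ) + 2) * (0 + 1) + 2 * 1))) :=
    (((hw.add_const 1).const_mul _).add (hs.const_mul 2)).const_mul 2
  have h0 : (2 : ℝ) * (((k : ℝ) + 2) * (0 + 1) + 2 * 1) ≠ 0 := by positivity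
  have hquot := hnum.div hden h0
  have : (((k : ℝ) + 1) * (0 + 1) + 2 * 1) / (2 * (((k : ℝ) + 2) * (0 + 1) + 2 * 1))
      = ((k : ℝ) + 3) / (2 * (k : ℝ) + 8) := by
    norm_num
    rw [show ((k:ℝ) + 1 + 2) = (k:ℝ) + 3 by ring, show (2*((k:ℝ) + 2 + 2)) = 2*(k:ℝ) + 8 by ring]
  rw [this] at hquot
  exact hquot

lemma limX_zero_small (hk : 1 ≤ k) (hβ : β < -1) :
    Tendsto (fun n : ℕ => (n : ℝ) ^ (0:ℝ) * brX k n ((n : ℝ) ^ β) ((n : ℝ) ^ (0:ℝ))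
      / ((1 + (n : ℝ) ^ (0:ℝ)) * brZ k n ((n : ℝ) ^ β) ((n : ℝ) ^ (0:ℝ))))
      atTop (nhds (((k : ℝ) + 1) / (2 * (k : ℝ) + 4))) := by
  apply limX_zero hk
  have hw : Tendsto (fun n : ℕ => (n : ℝ) ^ β) atTop (nhds 0) :=
    tendsto_nrpow_zero (by linarith)
  have hs := tendsto_Mw_zero k hβ
  have hnum : Tendsto (fun n : ℕ =>
      ((k : ℝ) + 1) * ((n : ℝ) ^ β + 1) + 2 * (((n : ℝ) - 1 - (k : ℝ)) * (n : ℝ) ^ β))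
      atTop (nhds (((k : ℝ) + 1) * (0 + 1) + 2 * 0)) :=
    ((hw.add_const 1).const_mul _).add (hs.const_mul 2)
  have hden : Tendsto (fun n : ℕ =>
      2 * (((k : ℝ) + 2) * ((n : ℝ) ^ β + 1) + 2 * (((n : ℝ) - 1 - (k : ℝ)) * (n : ℝ) ^ β)))
      atTop (nhds (2 * (((k : ℝ) + 2) * (0 + 1) + 2 * 0))) :=
    (((hw.add_const 1).const_mul _).add (hs.const_mul 2)).const_mul 2
  have h0 : (2 : ℝ) * (((k : ℝ) + 2) * (0 + 1) + 2 * 0) ≠ 0 := by positivity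
  have hquot := hnum.div hden h0
  have : (((k : ℝ) + 1) * (0 + 1) + 2 * 0) / (2 * (((k : ℝ) + 2) * (0 + 1) + 2 * 0))
      = ((k : ℝ) + 1) / (2 * (k : ℝ) + 4) := by
    norm_num
    rw [show (2*((k:ℝ) + 2)) = 2*(k:ℝ) + 4 by ring]
  rw [this] at hquot
  exact hquot

lemma limY_eq (hk : 1 ≤ k) :
    Tendsto (fun n : ℕ => (n : ℝ) ^ α * brY k n ((n : ℝ) ^ α) ((n : ℝ) ^ α)
      / (((n : ℝ) ^ α + (n : ℝ) ^ α) * brZ k n ((n : ℝ) ^ α) ((n : ℝ) ^ α)))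
      atTop (nhds (1 / 2)) := by
  have hs : Tendsto (fun n : ℕ => ((n : ℝ) - 1 - (k : ℝ))⁻¹) atTop (nhds 0) := tendsto_invM k
  have ht : Tendsto (fun n : ℕ => (((n : ℝ) - 1 - (k : ℝ)) * (1 + (n : ℝ) ^ α))⁻¹)
      atTop (nhds 0) := by
    refine tendsto_of_tendsto_of_tendsto_of_le_of_le' tendsto_const_nhds hs ?_ ?_
    · filter_upwards [eventually_ge_atTop (k + 2)] with n hn
      have hn0 : (0 : ℝ) < n := by exact_mod_cast Nat.lt_of_lt_of_le (by omega) hn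
      have hq : 0 < (n : ℝ) ^ α := rpow_pos_of_pos hn0 α
      have hcast : (k : ℝ) + 2 ≤ (n : ℝ) := by exact_mod_cast hn
      have hM : (0 : ℝ) < (n : ℝ) - 1 - (k : ℝ) := by linarith
      positivity
    · filter_upwards [eventually_ge_atTop (k + 2)] with n hn
      have hn0 : (0 : ℝ) < n := by exact_mod_cast Nat.lt_of_lt_of_le (by omega) hn
      have hq : 0 < (n : ℝ) ^ α := rpow_pos_of_pos hn0 α
      have hcast : (k : ℝ) + 2 ≤ (n : ℝ) := by exact_mod_cast hn
      have hM : (0 : ℝ) < (n : ℝ) - 1 - (k : ℝ) := by linarith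
      rw [inv_le_inv₀ (by positivity) hM]
      nlinarith [mul_pos hM hq]
  have hnum : Tendsto (fun n : ℕ =>
      ((n : ℝ) - 1 - (k : ℝ))⁻¹
        + 2 * (k : ℝ) * (((n : ℝ) - 1 - (k : ℝ)) * (1 + (n : ℝ) ^ α))⁻¹ + 1)
      atTop (nhds (0 + 2 * (k : ℝ) * 0 + 1)) := by
    exact (hs.add (ht.const_mul _)).add_const 1
  have hden : Tendsto (fun n : ℕ =>
      2 * (2 * ((n : ℝ) - 1 - (k : ℝ))⁻¹
        + 2 * (k : ℝ) * (((n : ℝ) - 1 - (k : ℝ)) * (1 + (n : ℝ) ^ α))⁻¹ + 1))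
      atTop (nhds (2 * (2 * 0 + 2 * (k : ℝ) * 0 + 1))) := by
    exact (((hs.const_mul 2).add (ht.const_mul _)).add_const 1).const_mul 2
  have h0 : (2 : ℝ) * (2 * 0 + 2 * (k : ℝ) * 0 + 1) ≠ 0 := by norm_num
  have hquot := hnum.div hden h0
  have : ((0 : ℝ) + 2 * (k : ℝ) * 0 + 1) / (2 * (2 * 0 + 2 * (k : ℝ) * 0 + 1)) = 1 / 2 := by
    norm_num
  rw [this] at hquot
  apply hquot.congr'
  filter_upwards [eventually_ge_atTop (k + 2)] with n hn
  have hn0 : (0 : ℝ) < n := by exact_mod_cast Nat.lt_of_lt_of_le (by omega) hn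
  have hq : 0 < (n : ℝ) ^ α := rpow_pos_of_pos hn0 α
  have hcast : (k : ℝ) + 2 ≤ (n : ℝ) := by exact_mod_cast hn
  have hM : (0 : ℝ) < (n : ℝ) - 1 - (k : ℝ) := by linarith
  rw [Pi.div_apply, brY, brZ]
  field_simp
  ring

end Analysis

open Filter Real in
/-- **Asymptotic detection in a star graph with two communities.** In `CSG_{n,k}` with
`q_n = n^α`, `w_n = n^β`, `k` constant, centre `c`, a leaf `x_n` incident to a weight-`1`
edge and a leaf `y_n` incident to a weight-`w` edge, the limits of `U_{q_n}(c,x_n)` and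
`U_{q_n}(c,y_n)` are as in the displayed case distinctions. -/
theorem community_star_asymptotics (k : ℕ) (hk : 1 ≤ k) (α β : ℝ)
    (x y : ℕ → ℕ)
    (hx : ∀ᶠ n in atTop, 1 ≤ x n ∧ x n ≤ k)
    (hy : ∀ᶠ n in atTop, k + 1 ≤ y n ∧ y n ≤ n - 1) :
    ((α < 0 → Tendsto (fun n : ℕ => UCStar n k ((n : ℝ) ^ β) ((n : ℝ) ^ α) 0 (x n))
        atTop (nhds 0)) ∧
      (α = 0 →
        ((β > -1 → Tendsto (fun n : ℕ => UCStar n k ((n : ℝ) ^ β) ((n : ℝ) ^ α) 0 (x n))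
            atTop (nhds (1 / 2))) ∧
          (β = -1 → Tendsto (fun n : ℕ => UCStar n k ((n : ℝ) ^ β) ((n : ℝ) ^ α) 0 (x n))
            atTop (nhds (((k : ℝ) + 3) / (2 * (k : ℝ) + 8)))) ∧
          (β < -1 → Tendsto (fun n : ℕ => UCStar n k ((n : ℝ) ^ β) ((n : ℝ) ^ α) 0 (x n))
            atTop (nhds (((k : ℝ) + 1) / (2 * (k : ℝ) + 4)))))) ∧
      (α > 0 → Tendsto (fun n : ℕ => UCStar n k ((n : ℝ) ^ β) ((n : ℝ) ^ α) 0 (x n))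
        atTop (nhds 1))) ∧
    ((α < β → Tendsto (fun n : ℕ => UCStar n k ((n : ℝ) ^ β) ((n : ℝ) ^ α) 0 (y n))
        atTop (nhds 0)) ∧
      (α = β → Tendsto (fun n : ℕ => UCStar n k ((n : ℝ) ^ β) ((n : ℝ) ^ α) 0 (y n))
        atTop (nhds (1 / 2))) ∧
      (α > β → Tendsto (fun n : ℕ => UCStar n k ((n : ℝ) ^ β) ((n : ℝ) ^ α) 0 (y n))
        atTop (nhds 1))) := by
  have hxEv : ∀ γ δ : ℝ, ∀ᶠ n : ℕ in atTop,
      UCStar n k ((n : ℝ) ^ δ) ((n : ℝ) ^ γ) 0 (x n)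
        = (n : ℝ) ^ γ * brX k n ((n : ℝ) ^ δ) ((n : ℝ) ^ γ)
          / ((1 + (n : ℝ) ^ γ) * brZ k n ((n : ℝ) ^ δ) ((n : ℝ) ^ γ)) := by
    intro γ δ
    filter_upwards [hx, eventually_ge_atTop (k + 3)] with n hxn hn
    have hn0 : (0 : ℝ) < n := by exact_mod_cast Nat.lt_of_lt_of_le (by omega) hn
    exact UCStar_x_eval hk (by omega) (rpow_pos_of_pos hn0 δ) (rpow_pos_of_pos hn0 γ)
      hxn.1 hxn.2
  have hyEv : ∀ γ δ : ℝ, ∀ᶠ n : ℕ in atTop,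
      UCStar n k ((n : ℝ) ^ δ) ((n : ℝ) ^ γ) 0 (y n)
        = (n : ℝ) ^ γ * brY k n ((n : ℝ) ^ δ) ((n : ℝ) ^ γ)
          / (((n : ℝ) ^ δ + (n : ℝ) ^ γ) * brZ k n ((n : ℝ) ^ δ) ((n : ℝ) ^ γ)) := by
    intro γ δ
    filter_upwards [hy, eventually_ge_atTop (k + 3)] with n hyn hn
    have hn0 : (0 : ℝ) < n := by exact_mod_cast Nat.lt_of_lt_of_le (by omega) hn
    exact UCStar_y_eval hk (by omega) (rpow_pos_of_pos hn0 δ) (rpow_pos_of_pos hn0 γ)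
      hyn.1 hyn.2
  refine ⟨⟨?_, ?_, ?_⟩, ?_, ?_, ?_⟩
  · intro hα
    exact Tendsto.congr' (Filter.EventuallyEq.symm (hxEv α β)) (limX_neg hk hα)
  · intro hα
    subst hα
    refine ⟨?_, ?_, ?_⟩
    · intro hβ
      exact Tendsto.congr' (Filter.EventuallyEq.symm (hxEv 0 β)) (limX_zero_big hk hβ)
    · intro hβ
      subst hβ
      exact Tendsto.congr' (Filter.EventuallyEq.symm (hxEv 0 (-1))) (limX_zero_crit hk)
    · intro hβ
      exact Tendsto.congr' (Filter.EventuallyEq.symm (hxEv 0 β)) (limX_zero_small hk hβ)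
  · intro hα
    exact Tendsto.congr' (Filter.EventuallyEq.symm (hxEv α β)) (limX_pos hk hα)
  · intro hαβ
    exact Tendsto.congr' (Filter.EventuallyEq.symm (hyEv α β)) (limY_lt hk hαβ)
  · intro hαβ
    subst hαβ
    exact Tendsto.congr' (Filter.EventuallyEq.symm (hyEv α α)) (limY_eq hk)
  · intro hαβ
    exact Tendsto.congr' (Filter.EventuallyEq.symm (hyEv α β)) (limY_gt hk hαβ)


end
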